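/- Let N be a complete Riemannian manifold with positive Ricci curvature, Γ a group acting on N by isometries, p̃ ∈ N, and R > 0. Suppose c : [0,∞) → N is a unit-speed ray starting at p̃ whose image is contained in ∪_{g∈Γ} g·B̄_R(p̃) (e.g., c is the lift of a bounded curve under a normal Riemannian covering with deck group Γ). Then a contradiction follows; i.e., no ray starting at p̃ can have image contained in the Γ-orbit of a fixed compact ball. -/

import Mathlib

universe u

/-- `N` splits off a line isometrically: there is a metric space `Y'` and a bijection
`N ≃ ℝ × Y'` under which the distance of `N` is the Euclidean product distance
√((s−t)² + d(y,y')²). -/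
def SplitsOffLine (N : Type u) [MetricSpace N] : Prop :=
  ∃ (Y' : Type u) (_ : MetricSpace Y') (e : N ≃ ℝ × Y'),
    ∀ a b : N, dist a b =
      Real.sqrt (((e a).1 - (e b).1) ^ 2 + dist (e a).2 (e b).2 ^ 2)

/- STATEMENT 9.
N a complete (proper, geodesic) Riemannian manifold with positive Ricci curvature,
Γ a group of isometries of N, p̃ ∈ N, R > 0, and c a unit-speed ray from p̃ whose image
lies in ∪_{g∈Γ} g·B̄_R(p̃).  Then a contradiction follows.  The positivity of the Ricci
curvature enters exactly through its two metric consequences used in the proof: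
(i) the Cheeger–Gromoll splitting theorem — if N contains a line then N splits off a
line isometrically — and (ii) N does not split off a line isometrically. -/
theorem no_ray_in_orbit_of_ball
    {N : Type u} [MetricSpace N] [ProperSpace N] [CompleteSpace N]
    (hgeo : ∀ x y : N, ∃ z : N, dist x z = dist x y / 2 ∧ dist z y = dist x y / 2)
    (hsplitting_thm : (∃ γ : ℝ → N, ∀ s t : ℝ, dist (γ s) (γ t) = |s - t|) →
      SplitsOffLine N)
    (hno_split : ¬ SplitsOffLine N)
    (Γ : Subgroup (N ≃ᵢ N)) (ptilde : N) (R : ℝ) (hR : 0 < R)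
    (c : ℝ → N) (hc0 : c 0 = ptilde)
    (hray : ∀ s ∈ Set.Ici (0:ℝ), ∀ t ∈ Set.Ici (0:ℝ), dist (c s) (c t) = |s - t|)
    (himage : ∀ t ≥ (0:ℝ), ∃ g ∈ Γ, c t ∈ Metric.closedBall (g ptilde) R) :
    False := by
  apply hno_split
  apply hsplitting_thm
  -- choose group elements bringing `c j` close to `ptilde`
  have hchoose : ∀ j : ℕ, ∃ g : N ≃ᵢ N, dist (c j) (g ptilde) ≤ R := by
    intro j
    obtain ⟨g, -, hg⟩ := himage (j : ℝ) (Nat.cast_nonneg j)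
    exact ⟨g, Metric.mem_closedBall.mp hg⟩
  choose g hg using hchoose
  set f : ℕ → ℝ → N := fun j s => (g j).symm (c ((j : ℝ) + s)) with hf
  -- basic distance computations
  have hdistf : ∀ (j : ℕ) (s t : ℝ), 0 ≤ (j : ℝ) + s → 0 ≤ (j : ℝ) + t →
      dist (f j s) (f j t) = |s - t| := by
    intro j s t hs ht
    have := hray ((j : ℝ) + s) hs ((j : ℝ) + t) ht
    simp only [hf]
    rw [IsometryEquiv.dist_eq, this]
    ring_nf
  have hbase : ∀ j : ℕ, dist (f j 0) ptilde ≤ R := by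
    intro j
    have : dist (f j 0) ptilde = dist (c ((j : ℝ) + 0)) (g j ptilde) := by
      simp only [hf]
      rw [← (g j).dist_eq ((g j).symm (c ((j : ℝ) + 0))) ptilde,
        IsometryEquiv.apply_symm_apply]
    rw [this, add_zero]
    exact hg j
  have hbound : ∀ (j : ℕ) (s : ℝ), 0 ≤ (j : ℝ) + s →
      f j s ∈ Metric.closedBall ptilde (|s| + R) := by
    intro j s hs
    have h1 : dist (f j s) (f j 0) = |s| := by
      have := hdistf j s 0 hs (by simpa using (Nat.cast_nonneg j))
      simpa using this
    have := dist_triangle (f j s) (f j 0) ptilde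
    rw [Metric.mem_closedBall]
    calc dist (f j s) ptilde ≤ dist (f j s) (f j 0) + dist (f j 0) ptilde := this
      _ ≤ |s| + R := by rw [h1]; exact add_le_add_right (hbase j) _
  -- the hyperfilter (a nonprincipal ultrafilter) on ℕ
  set U : Ultrafilter ℕ := Filter.hyperfilter ℕ with hU
  have hUc : (U : Filter ℕ) ≤ Filter.cofinite := Filter.hyperfilter_le_cofinite
  have hUat : (U : Filter ℕ) ≤ Filter.atTop := by
    rw [← Nat.cofinite_eq_atTop]; exact hUc
  -- eventually the translated curves realize the distance |s - t|
  have hev : ∀ s t : ℝ, ∀ᶠ j in (U : Filter ℕ), dist (f j s) (f j t) = |s - t| := by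
    intro s t
    apply Filter.Eventually.filter_mono hUat
    rw [Filter.eventually_atTop]
    refine ⟨⌈max (-s) (-t)⌉₊, fun j hj => ?_⟩
    have hj' : max (-s) (-t) ≤ (j : ℝ) := (Nat.ceil_le.mp hj)
    have hs : 0 ≤ (j : ℝ) + s := by
      have := le_trans (le_max_left (-s) (-t)) hj'; linarith
    have ht : 0 ≤ (j : ℝ) + t := by
      have := le_trans (le_max_right (-s) (-t)) hj'; linarith
    exact hdistf j s t hs ht
  -- eventually the translated curves lie in a fixed compact ball
  have hevB : ∀ s : ℝ, ∀ᶠ j in (U : Filter ℕ),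
      f j s ∈ Metric.closedBall ptilde (|s| + R) := by
    intro s
    apply Filter.Eventually.filter_mono hUat
    rw [Filter.eventually_atTop]
    refine ⟨⌈-s⌉₊, fun j hj => ?_⟩
    have : -s ≤ (j : ℝ) := Nat.ceil_le.mp hj
    exact hbound j s (by linarith)
  -- take the ultrafilter limit
  have hlim : ∀ s : ℝ, ∃ x : N,
      Filter.Tendsto (fun j => f j s) (U : Filter ℕ) (nhds x) := by
    intro s
    have hK : IsCompact (Metric.closedBall ptilde (|s| + R)) :=
      isCompact_closedBall ptilde (|s| + R)
    have hle : (U.map (fun j => f j s) : Filter N) ≤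
        Filter.principal (Metric.closedBall ptilde (|s| + R)) := by
      rw [Filter.le_principal_iff]
      exact Filter.mem_map.mpr (hevB s)
    obtain ⟨x, -, hx⟩ := hK.ultrafilter_le_nhds (U.map (fun j => f j s)) hle
    exact ⟨x, hx⟩
  choose γ hγ using hlim
  refine ⟨γ, fun s t => ?_⟩
  have h1 : Filter.Tendsto (fun j => dist (f j s) (f j t)) (U : Filter ℕ)
      (nhds (dist (γ s) (γ t))) := (hγ s).dist (hγ t)
  have h2 : Filter.Tendsto (fun j => dist (f j s) (f j t)) (U : Filter ℕ)
      (nhds (|s - t|)) := by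
    refine Filter.Tendsto.congr' ((hev s t).mono fun j hj => hj.symm) tendsto_const_nhds
  exact tendsto_nhds_unique h1 h2
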